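/- Let n ≥ 2 and R a commutative ring. Suppose there is NO bound L such that every element of the subgroup E(n,R) ≤ SL(n,R) generated by elementary transvections is a product of at most L elementary transvections. Then there exists a sequence (g_k) with g_k ∈ E(n,R) such that the element (g_k) of SL(n, R^ℕ) (with R^ℕ the countable product ring) does not lie in E(n, R^ℕ), the subgroup of SL(n, R^ℕ) generated by elementary transvections over R^ℕ. -/

import Mathlib

/-- An elementary transvection `t_{jk}(ξ) = 1 + ξ e_{jk}`, `j ≠ k`, in `SL(n,R)`. -/
def IsElementary {n : ℕ} {R : Type*} [CommRing R] (E : Matrix (Fin n) (Fin n) R) : Prop :=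
  ∃ (j k : Fin n) (ξ : R), j ≠ k ∧ E = 1 + Matrix.single j k ξ

/-- `E(n,R)`: the subgroup (here: submonoid, which coincides with the generated
subgroup since the inverse of a transvection is a transvection) of `SL(n,R)`
generated by the elementary transvections. -/
def elemGroup (n : ℕ) (R : Type*) [CommRing R] :
    Submonoid (Matrix (Fin n) (Fin n) R) :=
  Submonoid.closure {E | IsElementary E}

theorem unbounded_width_escapes_product
    {n : ℕ} (hn : 2 ≤ n) (R : Type*) [CommRing R]
    (h : ¬ ∃ L : ℕ, ∀ g ∈ elemGroup n R,
      ∃ l : List (Matrix (Fin n) (Fin n) R),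
        l.length ≤ L ∧ (∀ E ∈ l, IsElementary E) ∧ l.prod = g) :
    ∃ g : ℕ → Matrix (Fin n) (Fin n) R,
      (∀ k, g k ∈ elemGroup n R) ∧
      (Matrix.of (fun j k => fun i => g i j k) :
          Matrix (Fin n) (Fin n) (ℕ → R)) ∉ elemGroup n (ℕ → R) := by
  push_neg at h
  choose g hg hgl using h
  refine ⟨g, hg, ?_⟩
  intro hmem
  obtain ⟨l, hl, hprod⟩ := Submonoid.exists_list_of_mem_closure hmem
  set N := l.length with hN
  set φ : Matrix (Fin n) (Fin n) (ℕ → R) →+* Matrix (Fin n) (Fin n) R :=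
    (Pi.evalRingHom (fun _ => R) N).mapMatrix with hφ
  apply hgl N (l.map φ)
  · simpa [hN] using le_refl N
  · intro E hE
    obtain ⟨F, hF, rfl⟩ := List.mem_map.mp hE
    obtain ⟨j, k, ξ, hjk, rfl⟩ := hl F hF
    refine ⟨j, k, ξ N, hjk, ?_⟩
    ext a b
    simp [hφ, Matrix.single, Matrix.one_apply, Pi.evalRingHom]
    aesop
  · rw [← map_list_prod φ l, hprod]
    ext a b
    simp [hφ, Pi.evalRingHom]
    rfl
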